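/- Let p ≥ 0 be a real number, c > 0, q > 0, x0 ≥ 0, and let r be a natural number with r < q. Then the r-th moment of the IF3 distribution, ∫_{x0}^∞ x^r · (q/c) · ((p+1)^(-1/q) + (x-x0)/c)^(-q-1) · (1 - (1 + (p+1)^(1/q)·(x-x0)/c)^(-q))^p dx, equals Σ_{i=0}^{r} binomial(r,i) · x0^i · c^(r-i) · (p+1)^(1-(r-i)/q) · Σ_{k=0}^{r-i} binomial(r-i,k) · (-1)^k · B(1 - (r-i-k)/q, p+1), where B(a,b) = Γ(a)Γ(b)/Γ(a+b). -/

import Mathlib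

open MeasureTheory Real

/-- The Beta function expressed via the Gamma function. -/
noncomputable def betaFn (a b : ℝ) : ℝ := Real.Gamma a * Real.Gamma b / Real.Gamma (a + b)

lemma real_beta_integral {a b : ℝ} (ha : 0 < a) (hb : 0 < b) :
    ∫ u in Set.Ioo (0:ℝ) 1, u ^ (a - 1) * (1 - u) ^ (b - 1) = betaFn a b := by
  have key : Complex.betaIntegral a b =
      ((∫ u in (0:ℝ)..1, u ^ (a - 1) * (1 - u) ^ (b - 1) : ℝ) : ℂ) := by
    rw [Complex.betaIntegral, ← intervalIntegral.integral_ofReal]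
    refine intervalIntegral.integral_congr (fun x hx => ?_)
    rw [Set.uIcc_of_le (by norm_num)] at hx
    have e1 : ((a:ℂ)-1) = ((a-1:ℝ):ℂ) := by push_cast; ring
    have e2 : ((b:ℂ)-1) = ((b-1:ℝ):ℂ) := by push_cast; ring
    have e3 : (1 - (x:ℂ)) = ((1-x:ℝ):ℂ) := by push_cast; ring
    rw [e1, e2, e3, ← Complex.ofReal_cpow hx.1, ← Complex.ofReal_cpow (by linarith [hx.2]),
      Complex.ofReal_mul]
  have hG := Complex.Gamma_mul_Gamma_eq_betaIntegral
    (s := (a:ℂ)) (t := (b:ℂ)) (by simpa using ha) (by simpa using hb)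
  rw [key] at hG
  have hcast : ((a:ℂ) + b) = ((a + b : ℝ) : ℂ) := by push_cast; ring
  rw [hcast, Complex.Gamma_ofReal, Complex.Gamma_ofReal, Complex.Gamma_ofReal] at hG
  have hGne : Real.Gamma (a + b) ≠ 0 := Real.Gamma_ne_zero (fun m h => by
    have h1 : (0:ℝ) < a + b := by linarith
    have h2 : (0:ℝ) ≤ (m:ℝ) := Nat.cast_nonneg m
    rw [h] at h1; linarith)
  have : (∫ u in (0:ℝ)..1, u ^ (a - 1) * (1 - u) ^ (b - 1)) =
      Real.Gamma a * Real.Gamma b / Real.Gamma (a + b) := by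
    have h2 : Real.Gamma a * Real.Gamma b =
        Real.Gamma (a + b) * ∫ u in (0:ℝ)..1, u ^ (a - 1) * (1 - u) ^ (b - 1) := by
      exact_mod_cast hG
    field_simp
    linarith [h2]
  rw [betaFn, ← this, intervalIntegral.integral_of_le (by norm_num),
    ← integral_Ioc_eq_integral_Ioo]

lemma beta_integrand_integrableOn {a b : ℝ} (ha : 0 < a) (hb : 1 ≤ b) :
    IntegrableOn (fun u : ℝ => u ^ (a - 1) * (1 - u) ^ (b - 1)) (Set.Ioo 0 1) := by
  have h1 : IntegrableOn (fun u : ℝ => u ^ (a - 1)) (Set.Ioo 0 1) := by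
    have := intervalIntegral.intervalIntegrable_rpow' (a := (0:ℝ)) (b := 1) (r := a - 1) (by linarith)
    rwa [intervalIntegrable_iff_integrableOn_Ioo_of_le (by norm_num)] at this
  have hmeas : AEStronglyMeasurable (fun u : ℝ => (1 - u) ^ (b - 1))
      (volume.restrict (Set.Ioo (0:ℝ) 1)) :=
    (((continuous_const.sub continuous_id).rpow_const
      (fun x => Or.inr (by linarith))).measurable).aestronglyMeasurable
  have hbd : ∀ᵐ u ∂(volume.restrict (Set.Ioo (0:ℝ) 1)), ‖(1 - u) ^ (b - 1)‖ ≤ 1 := by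
    rw [ae_restrict_iff' measurableSet_Ioo]
    filter_upwards with u hu
    rw [Real.norm_eq_abs, abs_of_nonneg (Real.rpow_nonneg (by linarith [hu.2]) _)]
    exact Real.rpow_le_one (by linarith [hu.2]) (by linarith [hu.1]) (by linarith)
  have := Integrable.bdd_mul (c := 1) h1 hmeas hbd
  simpa [mul_comm, IntegrableOn] using this

/-- The `r`-th moment of the IF3 distribution. -/
theorem if3_moment (p c q x0 : ℝ) (r : ℕ) (hp : 0 ≤ p) (hc : 0 < c) (hq : 0 < q)
    (hx0 : 0 ≤ x0) (hr : (r : ℝ) < q) :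
    ∫ x in Set.Ioi x0,
        x ^ r * (q / c * ((p + 1) ^ (-1 / q) + (x - x0) / c) ^ (-q - 1) *
          (1 - (1 + (p + 1) ^ (1 / q) * ((x - x0) / c)) ^ (-q)) ^ p) =
      ∑ i ∈ Finset.range (r + 1),
        (r.choose i : ℝ) * x0 ^ i * c ^ (r - i) * (p + 1) ^ (1 - ((r : ℝ) - i) / q) *
          ∑ k ∈ Finset.range (r - i + 1),
            ((r - i).choose k : ℝ) * (-1) ^ k *
              betaFn (1 - (((r : ℝ) - i) - k) / q) (p + 1) := by
  have hp1 : (0:ℝ) < p + 1 := by linarith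
  have hq' : q ≠ 0 := ne_of_gt hq
  have hc' : c ≠ 0 := ne_of_gt hc
  have hexp : -1 / q < 0 := div_neg_of_neg_of_pos (by norm_num) hq
  set b' : ℝ := c * (p + 1) ^ (-1 / q) with hb'def
  have hb' : 0 < b' := mul_pos hc (Real.rpow_pos_of_pos hp1 _)
  set f : ℝ → ℝ := fun u => x0 + b' * (u ^ (-1 / q) - 1) with hfdef
  set f' : ℝ → ℝ := fun u => b' * (-1 / q * u ^ (-1 / q - 1)) with hf'def
  have himage : Set.Ioi x0 = f '' Set.Ioo 0 1 := by
    ext x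
    simp only [Set.mem_image, Set.mem_Ioi, Set.mem_Ioo]
    constructor
    · intro hx
      have hB : 1 < 1 + (x - x0) / b' := by
        have : 0 < (x - x0) / b' := div_pos (by linarith) hb'
        linarith
      have hB0 : (0:ℝ) < 1 + (x - x0) / b' := by linarith
      refine ⟨(1 + (x - x0) / b') ^ (-q), ⟨Real.rpow_pos_of_pos hB0 _,
        Real.rpow_lt_one_of_one_lt_of_neg hB (by linarith)⟩, ?_⟩
      have hpow : ((1 + (x - x0) / b') ^ (-q)) ^ (-1 / q) = 1 + (x - x0) / b' := by
        rw [← Real.rpow_mul hB0.le, show -q * (-1 / q) = 1 by field_simp, Real.rpow_one]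
      simp only [hfdef, hpow]
      field_simp; ring
    · rintro ⟨u, ⟨hu0, hu1⟩, rfl⟩
      have hv : 1 < u ^ (-1 / q) := by
        rw [Real.one_lt_rpow_iff_of_pos hu0]
        exact Or.inr ⟨hu1, hexp⟩
      simp only [hfdef]
      nlinarith
  have hderiv : ∀ u ∈ Set.Ioo (0:ℝ) 1, HasDerivWithinAt f (f' u) (Set.Ioo 0 1) u := by
    intro u hu
    have h1 : HasDerivAt (fun y : ℝ => y ^ (-1 / q)) (-1 / q * u ^ (-1 / q - 1)) u :=
      Real.hasDerivAt_rpow_const (Or.inl (ne_of_gt hu.1))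
    exact (((h1.sub_const 1).const_mul b').const_add x0).hasDerivWithinAt
  have hinj : Set.InjOn f (Set.Ioo 0 1) := by
    have hanti : StrictAntiOn f (Set.Ioo 0 1) := by
      intro u hu w hw huw
      have : w ^ (-1 / q) < u ^ (-1 / q) := Real.rpow_lt_rpow_of_neg hu.1 huw hexp
      simp only [hfdef]
      nlinarith
    exact hanti.injOn
  rw [himage, integral_image_eq_integral_abs_deriv_smul measurableSet_Ioo hderiv hinj]
  have hpt : ∀ u ∈ Set.Ioo (0:ℝ) 1,
      |f' u| • (f u ^ r * (q / c * ((p + 1) ^ (-1 / q) + (f u - x0) / c) ^ (-q - 1) *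
          (1 - (1 + (p + 1) ^ (1 / q) * ((f u - x0) / c)) ^ (-q)) ^ p))
      = ∑ i ∈ Finset.range (r + 1), ∑ k ∈ Finset.range (r - i + 1),
          ((r.choose i : ℝ) * x0 ^ i * c ^ (r - i) * (p + 1) ^ (1 - ((r - i : ℕ) : ℝ) / q) *
            (((r - i).choose k : ℝ) * (-1) ^ k)) *
          (u ^ ((1 - ((r - i - k : ℕ) : ℝ) / q) - 1) * (1 - u) ^ ((p + 1) - 1)) := by
    intro u hu
    obtain ⟨hu0, hu1⟩ := hu
    have hv0 : 0 < u ^ (-1 / q) := Real.rpow_pos_of_pos hu0 _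
    have hfu : f u - x0 = b' * (u ^ (-1 / q) - 1) := by simp [hfdef]
    have hdivc : b' * (u ^ (-1 / q) - 1) / c = (p + 1) ^ (-1 / q) * (u ^ (-1 / q) - 1) := by
      rw [hb'def]; field_simp
    have hone : (p + 1) ^ (1 / q) * (p + 1) ^ (-1 / q) = 1 := by
      rw [← Real.rpow_add hp1, show 1 / q + -1 / q = 0 by ring, Real.rpow_zero]
    have hkey1 : (p + 1) ^ (-1 / q) + (f u - x0) / c = (p + 1) ^ (-1 / q) * u ^ (-1 / q) := by
      rw [hfu, hdivc]; ring
    have hkey2 : 1 + (p + 1) ^ (1 / q) * ((f u - x0) / c) = u ^ (-1 / q) := by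
      rw [hfu, hdivc, ← mul_assoc, hone]; ring
    have hkey3 : (u ^ (-1 / q)) ^ (-q) = u := by
      rw [← Real.rpow_mul hu0.le, show -1 / q * -q = 1 by field_simp, Real.rpow_one]
    have hkey4 : ((p + 1) ^ (-1 / q) * u ^ (-1 / q)) ^ (-q - 1)
        = (p + 1) ^ (-1 / q * (-q - 1)) * u ^ (-1 / q * (-q - 1)) := by
      rw [Real.mul_rpow (Real.rpow_pos_of_pos hp1 _).le hv0.le,
        ← Real.rpow_mul hp1.le, ← Real.rpow_mul hu0.le]
    have hneg : f' u < 0 := by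
      have h2 : 0 < u ^ (-1 / q - 1) := Real.rpow_pos_of_pos hu0 _
      simp only [hf'def]
      exact mul_neg_of_pos_of_neg hb' (mul_neg_of_neg_of_pos hexp h2)
    have hXY : u ^ (-1 / q - 1) * u ^ (-1 / q * (-q - 1)) = 1 := by
      rw [← Real.rpow_add hu0, show -1 / q - 1 + -1 / q * (-q - 1) = 0 by field_simp; ring,
        Real.rpow_zero]
    have hPQ : (p + 1) ^ (-1 / q) * (p + 1) ^ (-1 / q * (-q - 1)) = p + 1 := by
      rw [← Real.rpow_add hp1, show -1 / q + -1 / q * (-q - 1) = 1 by field_simp; ring,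
        Real.rpow_one]
    have step1 : |f' u| • (f u ^ r * (q / c * ((p + 1) ^ (-1 / q) + (f u - x0) / c) ^ (-q - 1) *
          (1 - (1 + (p + 1) ^ (1 / q) * ((f u - x0) / c)) ^ (-q)) ^ p))
        = f u ^ r * ((p + 1) * (1 - u) ^ p) := by
      have hA : (p + 1) ^ (-1 / q * (-q - 1)) = (p + 1) / (p + 1) ^ (-1 / q) := by
        rw [eq_div_iff (ne_of_gt (Real.rpow_pos_of_pos hp1 _)), mul_comm]; exact hPQ
      have hX : u ^ (-1 / q * (-q - 1)) = 1 / u ^ (-1 / q - 1) := by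
        rw [eq_div_iff (ne_of_gt (Real.rpow_pos_of_pos hu0 _)), mul_comm]; exact hXY
      rw [smul_eq_mul, hkey1, hkey2, hkey3, hkey4, abs_of_neg hneg, hf'def, hb'def, hA, hX]
      have h5 : (0:ℝ) < (p + 1) ^ (-1 / q) := Real.rpow_pos_of_pos hp1 _
      have h6 : (0:ℝ) < u ^ (-1 / q - 1) := Real.rpow_pos_of_pos hu0 _
      field_simp
    rw [step1]
    have hfuv : f u = x0 + b' * (u ^ (-1 / q) - 1) := rfl
    rw [hfuv, add_pow, Finset.sum_mul]
    refine Finset.sum_congr rfl fun i hi => ?_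
    have hm : (u ^ (-1 / q) - 1) ^ (r - i) = ∑ k ∈ Finset.range (r - i + 1),
        (-1:ℝ) ^ k * (u ^ (-1 / q)) ^ (r - i - k) * ((r - i).choose k : ℝ) := by
      rw [show u ^ (-1 / q) - 1 = -1 + u ^ (-1 / q) by ring, add_pow]
    rw [mul_pow, hm, Finset.mul_sum, Finset.mul_sum, Finset.sum_mul, Finset.sum_mul]
    refine Finset.sum_congr rfl fun k hk => ?_
    rw [show ((p:ℝ) + 1) - 1 = p by ring]
    rw [← Real.rpow_natCast (u ^ (-1 / q)) (r - i - k), ← Real.rpow_mul hu0.le]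
    rw [show -1 / q * ((r - i - k : ℕ) : ℝ) = (1 - ((r - i - k : ℕ) : ℝ) / q) - 1 by ring]
    rw [hb'def, mul_pow c _ (r - i), ← Real.rpow_natCast ((p + 1) ^ (-1 / q)) (r - i),
      ← Real.rpow_mul hp1.le]
    have hpm : ((p:ℝ) + 1) ^ (1 - ((r - i : ℕ) : ℝ) / q)
        = (p + 1) ^ (-1 / q * ((r - i : ℕ) : ℝ)) * (p + 1) := by
      rw [show (1:ℝ) - ((r - i : ℕ) : ℝ) / q = (-1 / q * ((r - i : ℕ) : ℝ)) + 1 by ring,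
        Real.rpow_add hp1, Real.rpow_one]
    rw [hpm]; ring
  rw [setIntegral_congr_fun measurableSet_Ioo hpt]
  have hint : ∀ i ∈ Finset.range (r + 1), ∀ k ∈ Finset.range (r - i + 1),
      IntegrableOn (fun u : ℝ =>
        ((r.choose i : ℝ) * x0 ^ i * c ^ (r - i) * (p + 1) ^ (1 - ((r - i : ℕ) : ℝ) / q) *
            (((r - i).choose k : ℝ) * (-1) ^ k)) *
          (u ^ ((1 - ((r - i - k : ℕ) : ℝ) / q) - 1) * (1 - u) ^ ((p + 1) - 1)))
        (Set.Ioo 0 1) := by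
    intro i _ k _
    have ha : 0 < 1 - ((r - i - k : ℕ) : ℝ) / q := by
      have h0 : r - i - k ≤ r := by omega
      have h1 : ((r - i - k : ℕ) : ℝ) ≤ (r : ℝ) := by exact_mod_cast h0
      have : ((r - i - k : ℕ) : ℝ) / q < 1 := (div_lt_one hq).mpr (by linarith)
      linarith
    exact (beta_integrand_integrableOn ha (by linarith)).const_mul _
  rw [MeasureTheory.integral_finset_sum _
    (fun i hi => integrable_finset_sum _ (fun k hk => hint i hi k hk))]
  refine Finset.sum_congr rfl fun i hi => ?_
  rw [MeasureTheory.integral_finset_sum _ (fun k hk => hint i hi k hk), Finset.mul_sum]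
  refine Finset.sum_congr rfl fun k hk => ?_
  rw [MeasureTheory.integral_const_mul]
  have ha : 0 < 1 - ((r - i - k : ℕ) : ℝ) / q := by
    have h0 : r - i - k ≤ r := by omega
    have h1 : ((r - i - k : ℕ) : ℝ) ≤ (r : ℝ) := by exact_mod_cast h0
    have : ((r - i - k : ℕ) : ℝ) / q < 1 := (div_lt_one hq).mpr (by linarith)
    linarith
  rw [real_beta_integral ha (by linarith)]
  have hir : i ≤ r := by simpa using Nat.lt_succ_iff.mp (Finset.mem_range.mp hi)
  have hki : k ≤ r - i := by simpa using Nat.lt_succ_iff.mp (Finset.mem_range.mp hk)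
  have e1 : ((r - i : ℕ) : ℝ) = (r : ℝ) - i := by
    rw [Nat.cast_sub hir]
  have e2 : ((r - i - k : ℕ) : ℝ) = ((r : ℝ) - i) - k := by
    rw [Nat.cast_sub (by omega), Nat.cast_sub hir]
  rw [e1, e2]
  ring
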